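/- Let r(x) = (1/2)‖Ax−b‖² with column blocks Aᵢ, and let ηᵢ ≥ n‖Aᵢ‖₂² (operator norm squared). Then for all x, y: (1/2)‖Ax−b‖² ≤ ∑ᵢ ⟨xᵢ−yᵢ, Aᵢᵀ(Ay−b)⟩ + ∑ᵢ (ηᵢ/2)‖xᵢ−yᵢ‖² + (1/2)‖Ay−b‖². -/

import Mathlib

open Matrix
open scoped Matrix.Norms.L2Operator

private lemma sum_dot {m k : ℕ} (f : Fin k → Fin m → ℝ) (v : Fin m → ℝ) :
    (∑ i, f i) ⬝ᵥ v = ∑ i, f i ⬝ᵥ v := by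
  simp only [dotProduct, Finset.sum_apply, Finset.sum_mul]
  exact Finset.sum_comm

private lemma dot_self_eq_norm_sq {m : ℕ} (v : Fin m → ℝ) :
    v ⬝ᵥ v = ‖(EuclideanSpace.equiv (Fin m) ℝ).symm v‖ ^ 2 := by
  rw [EuclideanSpace.norm_eq, Real.sq_sqrt (by positivity)]
  simp [dotProduct, sq]

/-- Fully linearized separable majorant of `r(x)=½‖Ax-b‖²` (Lemma 3(3)),
with `ηᵢ ≥ n‖Aᵢ‖₂²` for the spectral norm `‖·‖₂`. -/
theorem stmt_14 {n d : ℕ} (p : Fin n → ℕ)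
    (A : ∀ i, Matrix (Fin d) (Fin (p i)) ℝ) (b : Fin d → ℝ)
    (η : Fin n → ℝ) (hη : ∀ i, (n : ℝ) * ‖A i‖ ^ 2 ≤ η i)
    (x y : ∀ i, Fin (p i) → ℝ) :
    (1/2) * ((∑ i, A i *ᵥ x i - b) ⬝ᵥ (∑ i, A i *ᵥ x i - b))
      ≤ ∑ i, (x i - y i) ⬝ᵥ ((A i)ᵀ *ᵥ (∑ j, A j *ᵥ y j - b))
        + ∑ i, (η i / 2) * ((x i - y i) ⬝ᵥ (x i - y i))
        + (1/2) * ((∑ i, A i *ᵥ y i - b) ⬝ᵥ (∑ i, A i *ᵥ y i - b)) := by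
  classical
  set v : Fin d → ℝ := ∑ j, A j *ᵥ y j - b with hv
  set δ : ∀ i, Fin (p i) → ℝ := fun i => x i - y i with hδ
  set w : Fin d → ℝ := ∑ i, A i *ᵥ δ i with hw
  have hu : (∑ i, A i *ᵥ x i - b) = v + w := by
    have : ∀ i, A i *ᵥ δ i = A i *ᵥ x i - A i *ᵥ y i := by
      intro i; simp [hδ, Matrix.mulVec_sub]
    simp only [hw, hv, this, Finset.sum_sub_distrib]
    abel
  -- cross term identity
  have hcross : ∑ i, (x i - y i) ⬝ᵥ ((A i)ᵀ *ᵥ v) = w ⬝ᵥ v := by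
    rw [hw, sum_dot]
    refine Finset.sum_congr rfl fun i _ => ?_
    rw [Matrix.mulVec_transpose, dotProduct_comm ((x i - y i)),
      ← Matrix.dotProduct_mulVec, dotProduct_comm]
  -- key quadratic bound
  have hkey : w ⬝ᵥ w ≤ ∑ i, η i * (δ i ⬝ᵥ δ i) := by
    rw [dot_self_eq_norm_sq]
    have hwsum : ‖(EuclideanSpace.equiv (Fin d) ℝ).symm w‖
        ≤ ∑ i, ‖A i‖ * ‖(EuclideanSpace.equiv (Fin (p i)) ℝ).symm (δ i)‖ := by
      have hmap : (EuclideanSpace.equiv (Fin d) ℝ).symm w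
          = ∑ i, (EuclideanSpace.equiv (Fin d) ℝ).symm (A i *ᵥ δ i) := by
        rw [hw]; exact map_sum _ _ _
      rw [hmap]
      refine (norm_sum_le _ _).trans (Finset.sum_le_sum fun i _ => ?_)
      exact (A i).l2_opNorm_mulVec ((EuclideanSpace.equiv (Fin (p i)) ℝ).symm (δ i))
    calc ‖(EuclideanSpace.equiv (Fin d) ℝ).symm w‖ ^ 2
        ≤ (∑ i, ‖A i‖ * ‖(EuclideanSpace.equiv (Fin (p i)) ℝ).symm (δ i)‖) ^ 2 :=
          pow_le_pow_left₀ (norm_nonneg _) hwsum 2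
      _ ≤ (n : ℝ) * ∑ i, (‖A i‖ * ‖(EuclideanSpace.equiv (Fin (p i)) ℝ).symm (δ i)‖) ^ 2 := by
          simpa using sq_sum_le_card_mul_sum_sq
            (s := Finset.univ)
            (f := fun i => ‖A i‖ * ‖(EuclideanSpace.equiv (Fin (p i)) ℝ).symm (δ i)‖)
      _ = ∑ i, ((n : ℝ) * ‖A i‖ ^ 2) * ‖(EuclideanSpace.equiv (Fin (p i)) ℝ).symm (δ i)‖ ^ 2 := by
          rw [Finset.mul_sum]; exact Finset.sum_congr rfl fun i _ => by ring
      _ ≤ ∑ i, η i * (δ i ⬝ᵥ δ i) := by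
          refine Finset.sum_le_sum fun i _ => ?_
          rw [dot_self_eq_norm_sq]
          exact mul_le_mul_of_nonneg_right (hη i) (by positivity)
  -- expand the square
  have hexp : (v + w) ⬝ᵥ (v + w) = v ⬝ᵥ v + 2 * (w ⬝ᵥ v) + w ⬝ᵥ w := by
    rw [add_dotProduct, dotProduct_add, dotProduct_add,
      dotProduct_comm v w]
    ring
  have hhalf : ∑ i, (η i / 2) * ((x i - y i) ⬝ᵥ (x i - y i))
      = (1/2) * ∑ i, η i * (δ i ⬝ᵥ δ i) := by
    rw [Finset.mul_sum]
    exact Finset.sum_congr rfl fun i _ => by simp only [hδ]; ring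
  rw [hu, hcross, hexp, hhalf]
  linarith [hkey]
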